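/- For c > 0 and linear maps M' : ℝ^n → ℝ^m, M : ℝ^m → ℝ^l, the Möbius matrix-vector multiplication satisfies matrix associativity: (M M') ⊗_c x = M ⊗_c (M' ⊗_c x) for all x ∈ D_c^n. -/

import Mathlib

noncomputable section
open Real
open scoped RealInnerProductSpace
attribute [local instance] Classical.propDecidable

/-- Inverse hyperbolic tangent. -/
def artanh (x : ℝ) : ℝ := (1 / 2) * Real.log ((1 + x) / (1 - x))

/-- Inverse hyperbolic cosine. -/
def arcosh (x : ℝ) : ℝ := Real.log (x + Real.sqrt (x ^ 2 - 1))

/-- Möbius addition on the ball `D_c^n`. -/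
def mAdd {n : ℕ} (c : ℝ) (x y : EuclideanSpace ℝ (Fin n)) : EuclideanSpace ℝ (Fin n) :=
  (1 / (1 + 2 * c * ⟪x, y⟫ + c ^ 2 * ‖x‖ ^ 2 * ‖y‖ ^ 2)) •
    ((1 + 2 * c * ⟪x, y⟫ + c * ‖y‖ ^ 2) • x + (1 - c * ‖x‖ ^ 2) • y)

/-- Möbius scalar multiplication. -/
def mSmul {n : ℕ} (c r : ℝ) (x : EuclideanSpace ℝ (Fin n)) : EuclideanSpace ℝ (Fin n) :=
  if x = 0 then 0 else
    ((1 / Real.sqrt c) * Real.tanh (r * _root_.artanh (Real.sqrt c * ‖x‖)) * ‖x‖⁻¹) • x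

/-- Induced gyrovector distance. -/
def mDist {n : ℕ} (c : ℝ) (x y : EuclideanSpace ℝ (Fin n)) : ℝ :=
  (2 / Real.sqrt c) * _root_.artanh (Real.sqrt c * ‖mAdd c (-x) y‖)

/-- Conformal factor. -/
def lam {n : ℕ} (c : ℝ) (x : EuclideanSpace ℝ (Fin n)) : ℝ := 2 / (1 - c * ‖x‖ ^ 2)

/-- Exponential map at `x`. -/
def expMap {n : ℕ} (c : ℝ) (x v : EuclideanSpace ℝ (Fin n)) : EuclideanSpace ℝ (Fin n) :=
  if v = 0 then x else
    mAdd c x ((Real.tanh (Real.sqrt c * lam c x * ‖v‖ / 2) / (Real.sqrt c * ‖v‖)) • v)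

/-- Logarithmic map at `x`. -/
def logMap {n : ℕ} (c : ℝ) (x y : EuclideanSpace ℝ (Fin n)) : EuclideanSpace ℝ (Fin n) :=
  if mAdd c (-x) y = 0 then 0 else
    ((2 / (Real.sqrt c * lam c x)) * _root_.artanh (Real.sqrt c * ‖mAdd c (-x) y‖) *
      ‖mAdd c (-x) y‖⁻¹) • mAdd c (-x) y

/-- Exponential map at the origin. -/
def expZero {n : ℕ} (c : ℝ) (v : EuclideanSpace ℝ (Fin n)) : EuclideanSpace ℝ (Fin n) :=
  if v = 0 then 0 else (Real.tanh (Real.sqrt c * ‖v‖) / (Real.sqrt c * ‖v‖)) • v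

/-- Logarithmic map at the origin. -/
def logZero {n : ℕ} (c : ℝ) (y : EuclideanSpace ℝ (Fin n)) : EuclideanSpace ℝ (Fin n) :=
  if y = 0 then 0 else (_root_.artanh (Real.sqrt c * ‖y‖) / (Real.sqrt c * ‖y‖)) • y

/-- Möbius version of a linear map. -/
def mMap {n m : ℕ} (c : ℝ) (M : EuclideanSpace ℝ (Fin n) →ₗ[ℝ] EuclideanSpace ℝ (Fin m))
    (x : EuclideanSpace ℝ (Fin n)) : EuclideanSpace ℝ (Fin m) :=
  if M x = 0 then 0 else
    ((1 / Real.sqrt c) * Real.tanh ((‖M x‖ / ‖x‖) * _root_.artanh (Real.sqrt c * ‖x‖)) *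
      ‖M x‖⁻¹) • M x

section
lemma artanh_tanh' (t : ℝ) : _root_.artanh (Real.tanh t) = t := by
  have hpos : (0:ℝ) < Real.exp t + Real.exp (-t) := by positivity
  have key : (1 + Real.tanh t) / (1 - Real.tanh t) = Real.exp (2*t) := by
    rw [Real.tanh_eq_sinh_div_cosh, Real.sinh_eq, Real.cosh_eq]
    have h2 : Real.exp (2*t) = Real.exp t / Real.exp (-t) := by
      rw [← Real.exp_sub]; ring_nf
    rw [h2]
    have he : Real.exp (-t) ≠ 0 := Real.exp_ne_zero _
    field_simp
    ring
  rw [_root_.artanh, key, Real.log_exp]; ring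

lemma tanh_pos' {t : ℝ} (ht : 0 < t) : 0 < Real.tanh t := by
  rw [Real.tanh_eq_sinh_div_cosh]
  exact div_pos (Real.sinh_pos_iff.mpr ht) (Real.cosh_pos _)

lemma artanh_pos' {u : ℝ} (h0 : 0 < u) (h1 : u < 1) : 0 < _root_.artanh u := by
  have : (1:ℝ) < (1 + u) / (1 - u) := by
    rw [lt_div_iff₀ (by linarith)]; linarith
  have := Real.log_pos this
  rw [_root_.artanh]; linarith

theorem mMap_comp {n m l : ℕ} (c : ℝ) (hc : 0 < c)
    (M' : EuclideanSpace ℝ (Fin n) →ₗ[ℝ] EuclideanSpace ℝ (Fin m))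
    (M : EuclideanSpace ℝ (Fin m) →ₗ[ℝ] EuclideanSpace ℝ (Fin l))
    (x : EuclideanSpace ℝ (Fin n)) (hx : c * ‖x‖ ^ 2 < 1) :
    mMap c (M.comp M') x = mMap c M (mMap c M' x) := by
  by_cases hMx : M' x = 0
  · simp [mMap, hMx, LinearMap.comp_apply, map_zero]
  by_cases hMMx : M (M' x) = 0
  · simp [mMap, hMx, hMMx, LinearMap.comp_apply, map_smul, smul_zero]
  -- main case
  have hxne : x ≠ 0 := by rintro rfl; simp at hMx
  have hxnorm : 0 < ‖x‖ := norm_pos_iff.mpr hxne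
  have hsc : 0 < Real.sqrt c := Real.sqrt_pos.mpr hc
  have hu1 : Real.sqrt c * ‖x‖ < 1 := by
    have : Real.sqrt c * ‖x‖ = Real.sqrt (c * ‖x‖ ^ 2) := by
      rw [Real.sqrt_mul hc.le, Real.sqrt_sq hxnorm.le]
    rw [this]
    have := Real.sqrt_lt_sqrt (by positivity) hx
    simpa using this
  set a := _root_.artanh (Real.sqrt c * ‖x‖) with ha_def
  have ha : 0 < a := artanh_pos' (by positivity) hu1
  have hM'n : 0 < ‖M' x‖ := norm_pos_iff.mpr hMx
  have hMMn : 0 < ‖M (M' x)‖ := norm_pos_iff.mpr hMMx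
  set s : ℝ := (1 / Real.sqrt c) * Real.tanh ((‖M' x‖ / ‖x‖) * a) * ‖M' x‖⁻¹ with hs_def
  have htanh : 0 < Real.tanh ((‖M' x‖ / ‖x‖) * a) := tanh_pos' (by positivity)
  have hs : 0 < s := by rw [hs_def]; positivity
  have hy : mMap c M' x = s • M' x := by rw [mMap, if_neg hMx]
  have hyn : ‖s • M' x‖ = s * ‖M' x‖ := by
    rw [norm_smul, Real.norm_eq_abs, abs_of_pos hs]
  have hsn : s * ‖M' x‖ = (1 / Real.sqrt c) * Real.tanh ((‖M' x‖ / ‖x‖) * a) := by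
    rw [hs_def]; field_simp
  have hMy : M (s • M' x) = s • M (M' x) := map_smul M s _
  have hMyne : s • M (M' x) ≠ 0 := smul_ne_zero hs.ne' hMMx
  have hMyn : ‖s • M (M' x)‖ = s * ‖M (M' x)‖ := by
    rw [norm_smul, Real.norm_eq_abs, abs_of_pos hs]
  have hart : _root_.artanh (Real.sqrt c * ‖s • M' x‖) = (‖M' x‖ / ‖x‖) * a := by
    rw [hyn, hsn]
    have : Real.sqrt c * ((1 / Real.sqrt c) * Real.tanh ((‖M' x‖ / ‖x‖) * a))
        = Real.tanh ((‖M' x‖ / ‖x‖) * a) := by field_simp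
    rw [this, artanh_tanh']
  rw [hy]
  simp only [mMap, LinearMap.comp_apply, hMy]
  rw [if_neg hMMx, if_neg hMyne]
  rw [hart, hMyn, hyn, smul_smul]
  congr 1
  have hratio : (s * ‖M (M' x)‖) / (s * ‖M' x‖) * ((‖M' x‖ / ‖x‖) * a)
      = (‖M (M' x)‖ / ‖x‖) * a := by
    field_simp
  rw [hratio]
  simp [LinearMap.comp_apply]
  field_simp
  ring
end
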